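/- Let ξ₀ ∈ ℝⁿ be nonzero and let U ⊆ ℝⁿ × ℝᵐ be an open set such that every vector (v, z₀) in the normal cone C_Z(U) of U along Z = {0} × ℝᵐ which satisfies ⟨ξ₀, v⟩ ≥ 0 has v = 0. Then there exist ε > 0 and δ > 0 such that U ∩ {(x,z) : |(x,z)| ≤ δ} ⊆ {(x,z) ∈ ℝⁿ × ℝᵐ : −⟨ξ₀, x⟩ > ε·|x|}. -/

import Mathlib

open Filter Topology

/-- The normal cone of a subset `A ⊆ ℝⁿ × ℝᵐ` along `Z = {0} × ℝᵐ`: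
`(v, z₀)` belongs to the cone iff there are positive reals `t k → 0` and points
`(x k, z k) ∈ A` with `z k → z₀` and `x k / t k → v`. -/
def normalCone (n m : ℕ)
    (A : Set (EuclideanSpace ℝ (Fin n) × EuclideanSpace ℝ (Fin m))) :
    Set (EuclideanSpace ℝ (Fin n) × EuclideanSpace ℝ (Fin m)) :=
  {p | ∃ (t : ℕ → ℝ) (x : ℕ → EuclideanSpace ℝ (Fin n))
        (z : ℕ → EuclideanSpace ℝ (Fin m)),
      (∀ k, 0 < t k) ∧ Tendsto t atTop (𝓝 0) ∧ (∀ k, (x k, z k) ∈ A) ∧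
      Tendsto z atTop (𝓝 p.2) ∧ Tendsto (fun k => (t k)⁻¹ • x k) atTop (𝓝 p.1)}

theorem stmt_3 {n m : ℕ} (ξ₀ : EuclideanSpace ℝ (Fin n)) (hξ : ξ₀ ≠ 0)
    (U : Set (EuclideanSpace ℝ (Fin n) × EuclideanSpace ℝ (Fin m)))
    (hUopen : IsOpen U)
    (hcone : ∀ v z₀, (v, z₀) ∈ normalCone n m U → 0 ≤ (inner ℝ ξ₀ v : ℝ) → v = 0) :
    ∃ ε > (0 : ℝ), ∃ δ > (0 : ℝ), ∀ p ∈ U,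
      Real.sqrt (‖p.1‖ ^ 2 + ‖p.2‖ ^ 2) ≤ δ →
      ε * ‖p.1‖ < -(inner ℝ ξ₀ p.1 : ℝ) := by
  by_contra H
  push_neg at H
  have h : ∀ k : ℕ, ∃ p ∈ U, Real.sqrt (‖p.1‖ ^ 2 + ‖p.2‖ ^ 2) ≤ 1 / ((k : ℝ) + 1) ∧
      -(inner ℝ ξ₀ p.1 : ℝ) ≤ (1 / ((k : ℝ) + 1)) * ‖p.1‖ := by
    intro k
    obtain ⟨p, hpU, h1, h2⟩ := H (1 / ((k : ℝ) + 1)) (by positivity) (1 / ((k : ℝ) + 1))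
      (by positivity)
    exact ⟨p, hpU, h1, h2⟩
  choose p hpU hpnorm hpineq using h
  have hbound : ∀ k : ℕ, ‖(p k).1‖ ≤ 1 / ((k : ℝ) + 1) ∧ ‖(p k).2‖ ≤ 1 / ((k : ℝ) + 1) := by
    intro k
    constructor
    · calc ‖(p k).1‖ = Real.sqrt (‖(p k).1‖ ^ 2) := (Real.sqrt_sq (norm_nonneg _)).symm
        _ ≤ Real.sqrt (‖(p k).1‖ ^ 2 + ‖(p k).2‖ ^ 2) :=
            Real.sqrt_le_sqrt (by nlinarith [sq_nonneg ‖(p k).2‖])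
        _ ≤ _ := hpnorm k
    · calc ‖(p k).2‖ = Real.sqrt (‖(p k).2‖ ^ 2) := (Real.sqrt_sq (norm_nonneg _)).symm
        _ ≤ Real.sqrt (‖(p k).1‖ ^ 2 + ‖(p k).2‖ ^ 2) :=
            Real.sqrt_le_sqrt (by nlinarith [sq_nonneg ‖(p k).1‖])
        _ ≤ _ := hpnorm k
  have hlim0 : Tendsto (fun k : ℕ => 1 / ((k : ℝ) + 1)) atTop (𝓝 0) :=
    tendsto_one_div_add_atTop_nhds_zero_nat
  by_cases hzero : ∃ k, (p k).1 = 0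
  · obtain ⟨k, hk⟩ := hzero
    set z₀ := (p k).2 with hz₀
    have hmem : ((0 : EuclideanSpace ℝ (Fin n)), z₀) ∈ U := by
      have := hpU k
      rwa [show (p k) = ((p k).1, (p k).2) from rfl, hk] at this
    obtain ⟨r, hr, hball⟩ := Metric.isOpen_iff.mp hUopen _ hmem
    have hξ0 : (0 : ℝ) < ‖ξ₀‖ := norm_pos_iff.mpr hξ
    have key : (ξ₀, z₀) ∈ normalCone n m U := by
      refine ⟨fun j => r / (‖ξ₀‖ * ((j : ℝ) + 2)), fun j => (r / (‖ξ₀‖ * ((j : ℝ) + 2))) • ξ₀,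
        fun _ => z₀, fun j => by positivity, ?_, ?_, tendsto_const_nhds, ?_⟩
      · have h1 : Tendsto (fun j : ℕ => ((j : ℝ) + 2)) atTop atTop :=
          tendsto_atTop_add_const_right _ 2 tendsto_natCast_atTop_atTop
        have h2 : Tendsto (fun j : ℕ => ‖ξ₀‖ * ((j : ℝ) + 2)) atTop atTop :=
          Tendsto.const_mul_atTop hξ0 h1
        have h3 := h2.inv_tendsto_atTop.const_mul r
        simpa [div_eq_mul_inv] using h3
      · intro j
        apply hball
        rw [Metric.mem_ball, Prod.dist_eq]
        simp only [dist_self, dist_zero_right]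
        have he : ‖(r / (‖ξ₀‖ * ((j : ℝ) + 2))) • ξ₀‖ = r / ((j : ℝ) + 2) := by
          rw [norm_smul, Real.norm_eq_abs, abs_of_pos (by positivity)]
          field_simp
        rw [he]
        have hlt : r / ((j : ℝ) + 2) < r := by
          rw [div_lt_iff₀ (by positivity)]
          nlinarith [Nat.cast_nonneg (α := ℝ) j]
        calc max (r / ((j : ℝ) + 2)) 0 = r / ((j : ℝ) + 2) := max_eq_left (by positivity)
          _ < r := hlt
      · have he : (fun j : ℕ => (r / (‖ξ₀‖ * ((j : ℝ) + 2)))⁻¹ •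
            ((r / (‖ξ₀‖ * ((j : ℝ) + 2))) • ξ₀)) = fun _ => ξ₀ := by
          funext j
          rw [smul_smul, inv_mul_cancel₀ (by positivity), one_smul]
        rw [he]
        exact tendsto_const_nhds
    exact hξ (hcone ξ₀ z₀ key real_inner_self_nonneg)
  · push_neg at hzero
    set u : ℕ → EuclideanSpace ℝ (Fin n) := fun k => ‖(p k).1‖⁻¹ • (p k).1 with hu
    have husphere : ∀ k, u k ∈ Metric.sphere (0 : EuclideanSpace ℝ (Fin n)) 1 := by
      intro k
      simp only [Metric.mem_sphere, dist_zero_right, hu]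
      exact norm_smul_inv_norm (hzero k)
    obtain ⟨v, hv, φ, hφ, hvt⟩ :=
      (isCompact_sphere (0 : EuclideanSpace ℝ (Fin n)) 1).tendsto_subseq husphere
    have hφle : ∀ k, k ≤ φ k := fun k => hφ.le_apply
    have hx0 : Tendsto (fun k => ‖(p k).1‖) atTop (𝓝 0) :=
      squeeze_zero (fun k => norm_nonneg _) (fun k => (hbound k).1) hlim0
    have hz0 : Tendsto (fun k => (p k).2) atTop (𝓝 0) := by
      rw [tendsto_zero_iff_norm_tendsto_zero]
      exact squeeze_zero (fun k => norm_nonneg _) (fun k => (hbound k).2) hlim0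
    have hφtop : Tendsto φ atTop atTop := hφ.tendsto_atTop
    have key : (v, (0 : EuclideanSpace ℝ (Fin m))) ∈ normalCone n m U :=
      ⟨fun k => ‖(p (φ k)).1‖, fun k => (p (φ k)).1, fun k => (p (φ k)).2,
        fun k => norm_pos_iff.mpr (hzero (φ k)), hx0.comp hφtop, fun k => hpU (φ k),
        hz0.comp hφtop, hvt⟩
    have hinner : 0 ≤ (inner ℝ ξ₀ v : ℝ) := by
      have hlimv : Tendsto (fun k => (inner ℝ ξ₀ (u (φ k)) : ℝ)) atTop (𝓝 (inner ℝ ξ₀ v)) :=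
        Tendsto.inner tendsto_const_nhds hvt
      have hlb : ∀ k : ℕ, -(1 / ((k : ℝ) + 1)) ≤ (inner ℝ ξ₀ (u (φ k)) : ℝ) := by
        intro k
        have h1 : (inner ℝ ξ₀ (u (φ k)) : ℝ) = ‖(p (φ k)).1‖⁻¹ * inner ℝ ξ₀ (p (φ k)).1 :=
          real_inner_smul_right _ _ _
        have hn : (0 : ℝ) < ‖(p (φ k)).1‖ := norm_pos_iff.mpr (hzero (φ k))
        have h3 : (1 / ((φ k : ℝ) + 1)) ≤ 1 / ((k : ℝ) + 1) := by
          apply one_div_le_one_div_of_le (by positivity)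
          have : (k : ℝ) ≤ (φ k : ℝ) := Nat.cast_le.mpr (hφle k)
          linarith
        have h4 : -(inner ℝ ξ₀ (p (φ k)).1 : ℝ) ≤ (1 / ((k : ℝ) + 1)) * ‖(p (φ k)).1‖ :=
          le_trans (hpineq (φ k)) (mul_le_mul_of_nonneg_right h3 (norm_nonneg _))
        rw [h1]
        have h5 := mul_le_mul_of_nonneg_left h4 (inv_pos.mpr hn).le
        have h7 : ‖(p (φ k)).1‖⁻¹ * (1 / ((k : ℝ) + 1) * ‖(p (φ k)).1‖)
            = 1 / ((k : ℝ) + 1) := by field_simp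
        have h8 := mul_neg ‖(p (φ k)).1‖⁻¹ (inner ℝ ξ₀ (p (φ k)).1 : ℝ)
        linarith [h5, h7, h8]
      have hlbtendsto : Tendsto (fun k : ℕ => -(1 / ((k : ℝ) + 1))) atTop (𝓝 0) := by
        simpa using hlim0.neg
      exact le_of_tendsto_of_tendsto' hlbtendsto hlimv hlb
    have hv0 := hcone v 0 key hinner
    rw [hv0] at hv
    simp at hv
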